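/- Let f : ℝ → ℝ be real analytic at x₀ with f'(x₀) ≠ 0, and define γ(f, x₀) := sup_{k ≥ 2} |f^{(k)}(x₀)/(k! f'(x₀))|^{1/(k−1)}. Then 1/γ(f, x₀) is a lower bound for the radius of convergence of the Taylor series of f about x₀; in particular if f is a polynomial of degree ≥ 2 then γ(f, x₀) is finite and positive unless all derivatives of order ≥ 2 vanish at x₀. -/

import Mathlib

theorem gamma_bounds_radius_of_convergence (f : ℝ → ℝ) (x₀ : ℝ)
    (hf : AnalyticAt ℝ f x₀) (hf' : deriv f x₀ ≠ 0) (γ : ℝ)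
    (hγ : IsLUB {y : ℝ | ∃ k : ℕ, 2 ≤ k ∧
        y = |iteratedDeriv k f x₀ / ((k.factorial : ℝ) * deriv f x₀)| ^
          ((1 : ℝ) / ((k : ℝ) - 1))} γ) :
    (∀ x : ℝ, |x - x₀| * γ < 1 →
      Summable (fun k : ℕ =>
        iteratedDeriv k f x₀ / (k.factorial : ℝ) * (x - x₀) ^ k)) ∧
    ((∃ p : Polynomial ℝ, 2 ≤ p.natDegree ∧ f = fun x => p.eval x) →
      (∃ k : ℕ, 2 ≤ k ∧ iteratedDeriv k f x₀ ≠ 0) → 0 < γ) := by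
  have hub := hγ.1
  have hγ0 : 0 ≤ γ := by
    have hmem : |iteratedDeriv 2 f x₀ / (((2:ℕ).factorial : ℝ) * deriv f x₀)| ^
        ((1 : ℝ) / (((2:ℕ) : ℝ) - 1)) ≤ γ := hub ⟨2, le_refl 2, rfl⟩
    exact le_trans (Real.rpow_nonneg (abs_nonneg _) _) hmem
  have key : ∀ k : ℕ, 2 ≤ k →
      |iteratedDeriv k f x₀ / (k.factorial : ℝ)| ≤ |deriv f x₀| * γ ^ (k - 1) := by
    intro k hk
    have hk2 : (2 : ℝ) ≤ (k : ℝ) := by exact_mod_cast hk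
    have hc : ((k : ℝ) - 1) ≠ 0 := by linarith
    have hmem : |iteratedDeriv k f x₀ / ((k.factorial : ℝ) * deriv f x₀)| ^
        ((1 : ℝ) / ((k : ℝ) - 1)) ≤ γ := hub ⟨k, hk, rfl⟩
    have h1 : |iteratedDeriv k f x₀ / ((k.factorial : ℝ) * deriv f x₀)| ≤ γ ^ (k - 1) := by
      have h2 := pow_le_pow_left₀ (Real.rpow_nonneg (abs_nonneg _) _) hmem (k - 1)
      rwa [← Real.rpow_natCast (|iteratedDeriv k f x₀ / ((k.factorial : ℝ) * deriv f x₀)| ^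
          ((1 : ℝ) / ((k : ℝ) - 1))) (k - 1), ← Real.rpow_mul (abs_nonneg _),
        Nat.cast_sub (by omega : 1 ≤ k), Nat.cast_one, one_div,
        inv_mul_cancel₀ hc, Real.rpow_one] at h2
    have heq : iteratedDeriv k f x₀ / (k.factorial : ℝ) =
        (iteratedDeriv k f x₀ / ((k.factorial : ℝ) * deriv f x₀)) * deriv f x₀ := by
      field_simp
    rw [heq, abs_mul]
    calc |iteratedDeriv k f x₀ / ((k.factorial : ℝ) * deriv f x₀)| * |deriv f x₀|
        ≤ γ ^ (k - 1) * |deriv f x₀| :=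
          mul_le_mul_of_nonneg_right h1 (abs_nonneg _)
      _ = |deriv f x₀| * γ ^ (k - 1) := mul_comm _ _
  constructor
  · intro x hx
    set r := |x - x₀| with hr
    have hr0 : 0 ≤ r := abs_nonneg _
    set q := γ * r with hq
    have hq0 : 0 ≤ q := mul_nonneg hγ0 hr0
    have hq1 : q < 1 := by rw [hq, mul_comm]; exact hx
    have hgeo : Summable (fun n : ℕ => q ^ n) := summable_geometric_of_lt_one hq0 hq1
    have hs : Summable (fun k : ℕ => q ^ (k - 1)) := by
      rw [← summable_nat_add_iff 1]
      simpa using hgeo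
    have hs2 : Summable (fun k : ℕ => (|deriv f x₀| * r) * q ^ (k - 1)) := hs.mul_left _
    apply Summable.of_norm_bounded_eventually_nat hs2
    filter_upwards [Filter.eventually_ge_atTop 2] with k hk
    have hk1 : k - 1 + 1 = k := Nat.succ_pred_eq_of_pos (lt_of_lt_of_le Nat.zero_lt_two hk)
    have hrk : r ^ k = r ^ (k - 1) * r := by
      conv_lhs => rw [← hk1, pow_succ]
    calc ‖iteratedDeriv k f x₀ / (k.factorial : ℝ) * (x - x₀) ^ k‖
        = |iteratedDeriv k f x₀ / (k.factorial : ℝ)| * r ^ k := by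
          rw [Real.norm_eq_abs, abs_mul, abs_pow]
      _ ≤ (|deriv f x₀| * γ ^ (k - 1)) * r ^ k :=
          mul_le_mul_of_nonneg_right (key k hk) (pow_nonneg hr0 _)
      _ = (|deriv f x₀| * r) * q ^ (k - 1) := by
          rw [hrk, hq, mul_pow]; ring
  · rintro _ ⟨k, hk, hck⟩
    have hkf : ((k.factorial : ℝ) * deriv f x₀) ≠ 0 :=
      mul_ne_zero (Nat.cast_ne_zero.mpr k.factorial_ne_zero) hf'
    have hpos : 0 < |iteratedDeriv k f x₀ / ((k.factorial : ℝ) * deriv f x₀)| ^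
        ((1 : ℝ) / ((k : ℝ) - 1)) :=
      Real.rpow_pos_of_pos (abs_pos.mpr (div_ne_zero hck hkf)) _
    exact lt_of_lt_of_le hpos (hub ⟨k, hk, rfl⟩)
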